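/- If a digraph D on n vertices contains ψ pairwise vertex-disjoint ICC subgraphs, where the i-th subgraph is a k_i-ICC digraph, then there is a valid index code for D of length n − Σ_{i=1}^ψ (k_i − 1): code each ICC subgraph with its ICC code and send the remaining messages uncoded. -/

import Mathlib

/-- An ICC digraph with `k` Type-I paths. `n1 i ≥ 1` is the number of vertices of
Type-I path `P_i`; `n2 i j` is the number of vertices of Type-II path `P_{i,j}`
(`0` if empty, and `n2 i i = 0`); `q i j` (1-based, `1 ≤ q i j ≤ n1 j`) is the
index of the vertex of `P_j` that the arc leaving `P_{i,j}` (or, if `P_{i,j}` is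
empty, the arc leaving the terminal vertex of `P_i`) points to. -/
structure ICCDigraph (k : ℕ) where
  n1 : Fin k → ℕ
  hn1 : ∀ i, 1 ≤ n1 i
  n2 : Fin k → Fin k → ℕ
  hdiag : ∀ i, n2 i i = 0
  q : Fin k → Fin k → ℕ
  hq1 : ∀ i j, 1 ≤ q i j
  hq2 : ∀ i j, q i j ≤ n1 j

namespace ICCDigraph

variable {k : ℕ} (D : ICCDigraph k)

/-- The vertex set: vertices `v_{a+1}^i = ⟨i, a⟩` of Type-I paths (0-based `a`),
and vertices `v_{b+1}^{ij} = ⟨(i,j), b⟩` of Type-II paths. -/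
abbrev Vtx : Type :=
  (Σ i : Fin k, Fin (D.n1 i)) ⊕ (Σ p : Fin k × Fin k, Fin (D.n2 p.1 p.2))

/-- The terminal vertex `v_{n_i}^i` of Type-I path `P_i`. -/
def terminal (i : Fin k) : D.Vtx :=
  Sum.inl ⟨i, ⟨D.n1 i - 1, by have := D.hn1 i; omega⟩⟩

/-- The arc relation of the ICC digraph: arcs along Type-I and Type-II paths,
and the interconnecting arcs. -/
def Arc : D.Vtx → D.Vtx → Prop
  | Sum.inl ⟨i, a⟩, Sum.inl ⟨j, a'⟩ =>
      (i = j ∧ (a' : ℕ) = (a : ℕ) + 1) ∨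
      (i ≠ j ∧ (a : ℕ) = D.n1 i - 1 ∧ D.n2 i j = 0 ∧ (a' : ℕ) = D.q i j - 1)
  | Sum.inl ⟨i, a⟩, Sum.inr ⟨p, b⟩ =>
      i = p.1 ∧ (a : ℕ) = D.n1 i - 1 ∧ (b : ℕ) = 0
  | Sum.inr ⟨p, b⟩, Sum.inr ⟨p', b'⟩ =>
      p = p' ∧ (b' : ℕ) = (b : ℕ) + 1
  | Sum.inr ⟨p, b⟩, Sum.inl ⟨j, a⟩ =>
      p.2 = j ∧ (b : ℕ) = D.n2 p.1 p.2 - 1 ∧ (a : ℕ) = D.q p.1 p.2 - 1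

/-- A closed directed walk (cycle) starting and ending at `v`, visiting the
vertices `v :: l`. -/
def IsClosedWalk (v : D.Vtx) (l : List D.Vtx) : Prop :=
  List.Chain D.Arc v (l ++ [v])

/-- `S` induces an acyclic subdigraph: no directed cycle lies within `S`. -/
def AcyclicOn (S : Finset D.Vtx) : Prop :=
  ¬ ∃ (v : D.Vtx) (l : List D.Vtx), v ∈ S ∧ (∀ u ∈ l, u ∈ S) ∧ D.IsClosedWalk v l

open Classical in
/-- `MAIS(D)`: the maximum order of an acyclic induced subdigraph. -/
noncomputable def mais : ℕ :=
  (Finset.univ.filter fun S : Finset D.Vtx => D.AcyclicOn S).sup Finset.card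

/-- The message (1-based index `a`) of the `a`-th vertex of Type-I path `P_i`
(`0` if out of range). -/
def msgI {t : ℕ} (x : D.Vtx → Fin t → ZMod 2) (i : Fin k) (a : ℕ) :
    Fin t → ZMod 2 :=
  if h : 1 ≤ a ∧ a ≤ D.n1 i then x (Sum.inl ⟨i, ⟨a - 1, by omega⟩⟩) else 0

/-- The message (1-based index `b`) of the `b`-th vertex of Type-II path
`P_{i,j}` (`0` if out of range). -/
def msgII {t : ℕ} (x : D.Vtx → Fin t → ZMod 2) (i j : Fin k) (b : ℕ) :
    Fin t → ZMod 2 :=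
  if h : 1 ≤ b ∧ b ≤ D.n2 i j then x (Sum.inr ⟨(i, j), ⟨b - 1, by show b - 1 < D.n2 i j; omega⟩⟩) else 0

/-- Index set of the ICC code's codewords: the `n_i - 1` codewords along each
Type-I path, the `n_{ij} - 1` codewords along each Type-II path, one codeword per
nonempty Type-II path, and the single codeword `⊕ᵢ x_{n_i}^i`. -/
abbrev CodeIdx : Type :=
  (Σ i : Fin k, Fin (D.n1 i - 1)) ⊕
    ((Σ p : Fin k × Fin k, Fin (D.n2 p.1 p.2 - 1)) ⊕
      (({p : Fin k × Fin k // 1 ≤ D.n2 p.1 p.2}) ⊕ Unit))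

/-- The ICC code: `w_a^i = x_a^i ⊕ x_{a+1}^i`, `w_b^{ij} = x_b^{ij} ⊕ x_{b+1}^{ij}`,
`w_{n_{ij}}^{ij} = x_{n_{ij}}^{ij} ⊕ x_{q_i}^j`, and `w' = ⊕ᵢ x_{n_i}^i`. -/
def code {t : ℕ} (x : D.Vtx → Fin t → ZMod 2) : D.CodeIdx → Fin t → ZMod 2
  | Sum.inl ⟨i, a⟩ => D.msgI x i ((a : ℕ) + 1) + D.msgI x i ((a : ℕ) + 2)
  | Sum.inr (Sum.inl ⟨p, b⟩) =>
      D.msgII x p.1 p.2 ((b : ℕ) + 1) + D.msgII x p.1 p.2 ((b : ℕ) + 2)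
  | Sum.inr (Sum.inr (Sum.inl ⟨p, _⟩)) =>
      D.msgII x p.1 p.2 (D.n2 p.1 p.2) + D.msgI x p.2 (D.q p.1 p.2)
  | Sum.inr (Sum.inr (Sum.inr _)) => ∑ i : Fin k, D.msgI x i (D.n1 i)

end ICCDigraph

section Helpers
variable {t : ℕ}

lemma zmod2_cancel (g : Fin t → ZMod 2) : g + g = 0 :=
  funext fun s => by
    have h : ∀ a : ZMod 2, a + a = 0 := by decide
    exact h _

lemma zmod2_tele (f : ℕ → Fin t → ZMod 2) {q n : ℕ} (h : q ≤ n) :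
    ∑ a ∈ Finset.Ico q n, (f a + f (a + 1)) = f q + f n := by
  induction n, h using Nat.le_induction with
  | base => simp [(zmod2_cancel (f q)).symm]
  | succ n hqn ih =>
      rw [Finset.sum_Ico_succ_top hqn, ih]
      funext s
      have h3 : ∀ a b c : ZMod 2, a + b + (b + c) = a + c := by decide
      simpa using h3 (f q s) (f n s) (f (n + 1) s)

end Helpers

namespace ICCDigraph
variable {k : ℕ} (D : ICCDigraph k)

lemma card_vtx : Fintype.card D.Vtx = (∑ j, D.n1 j) + ∑ p : Fin k × Fin k, D.n2 p.1 p.2 := by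
  simp [ICCDigraph.Vtx]

lemma card_codeIdx (hk : 1 ≤ k) :
    Fintype.card D.CodeIdx + (k - 1) = Fintype.card D.Vtx := by
  classical
  have h1 : Fintype.card D.CodeIdx
      = (∑ j, (D.n1 j - 1)) + ((∑ p : Fin k × Fin k, (D.n2 p.1 p.2 - 1))
        + ((Finset.univ.filter fun p : Fin k × Fin k => 1 ≤ D.n2 p.1 p.2).card + 1)) := by
    simp [ICCDigraph.CodeIdx, Fintype.card_subtype]
  have h2 : (Finset.univ.filter fun p : Fin k × Fin k => 1 ≤ D.n2 p.1 p.2).card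
      = ∑ p : Fin k × Fin k, if 1 ≤ D.n2 p.1 p.2 then 1 else 0 := Finset.card_filter _ _
  have h3 : ∑ p : Fin k × Fin k, ((D.n2 p.1 p.2 - 1) + if 1 ≤ D.n2 p.1 p.2 then 1 else 0)
      = ∑ p : Fin k × Fin k, D.n2 p.1 p.2 := Finset.sum_congr rfl fun p _ => by split <;> omega
  have h4 : ∑ j : Fin k, (D.n1 j - 1 + 1) = ∑ j : Fin k, D.n1 j :=
    Finset.sum_congr rfl fun j _ => by have := D.hn1 j; omega
  rw [Finset.sum_add_distrib] at h3 h4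
  have h5 : ∑ _j : Fin k, 1 = k := by simp
  rw [card_vtx, h1, h2]
  omega

lemma msgI_eq {t : ℕ} (x : D.Vtx → Fin t → ZMod 2)
    (i : Fin k) (a : ℕ) (b : Fin (D.n1 i)) (h1 : 1 ≤ a) (hb : (b : ℕ) = a - 1) :
    D.msgI x i a = x (Sum.inl ⟨i, b⟩) := by
  have h2 : a ≤ D.n1 i := by have := b.isLt; omega
  rw [msgI, dif_pos ⟨h1, h2⟩]
  exact congrArg (fun c : Fin (D.n1 i) => x (Sum.inl ⟨i, c⟩)) (Fin.ext hb.symm)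

lemma msgII_eq {t : ℕ} (x : D.Vtx → Fin t → ZMod 2)
    (i j : Fin k) (a : ℕ) (b : Fin (D.n2 i j)) (h1 : 1 ≤ a) (hb : (b : ℕ) = a - 1) :
    D.msgII x i j a = x (Sum.inr ⟨(i, j), b⟩) := by
  have h2 : a ≤ D.n2 i j := by have := b.isLt; omega
  rw [msgII, dif_pos ⟨h1, h2⟩]
  exact congrArg (fun c : Fin (D.n2 i j) => x (Sum.inr ⟨(i, j), c⟩)) (Fin.ext hb.symm)

end ICCDigraph
set_option maxHeartbeats 1000000 in
/-- If a digraph on `n` vertices with arc relation `A` contains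
`ψ` pairwise vertex-disjoint induced subdigraphs, the `i`-th being a
`k_i`-ICC digraph, then there is a valid index code for the whole problem of
length `n - ∑ᵢ (k_i - 1)` packets: code each ICC subgraph with its ICC code and
send the remaining messages uncoded. -/
theorem stmt18 (n ψ t : ℕ) (A : Fin n → Fin n → Prop)
    (kvec : Fin ψ → ℕ)
    (Ds : (i : Fin ψ) → ICCDigraph (kvec i))
    (S : Fin ψ → Finset (Fin n))
    (hdisj : ∀ i j, i ≠ j → Disjoint (S i) (S j))
    (e : (i : Fin ψ) → (Ds i).Vtx ≃ {v : Fin n // v ∈ S i})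
    (hind : ∀ (i : Fin ψ) (u v : (Ds i).Vtx),
      (Ds i).Arc u v ↔ A ((e i) u).1 ((e i) v).1) :
    ∃ E : (Fin n → Fin t → ZMod 2) →
        Fin (n - ∑ i : Fin ψ, (kvec i - 1)) → Fin t → ZMod 2,
      ∀ v : Fin n,
        ∃ g : (Fin (n - ∑ i : Fin ψ, (kvec i - 1)) → Fin t → ZMod 2) →
            ({u : Fin n // A v u} → Fin t → ZMod 2) → (Fin t → ZMod 2),
          ∀ x, g (E x) (fun u => x u.1) = x v := by
  classical
  -- cardinality facts
  have hcardS : ∀ i, Fintype.card (Ds i).Vtx = (S i).card := fun i => by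
    rw [Fintype.card_congr (e i)]; exact Fintype.card_coe _
  have hsumS : ∑ i, (S i).card ≤ n := by
    calc ∑ i, (S i).card = (Finset.univ.biUnion S).card :=
          (Finset.card_biUnion (fun i _ j _ hij => hdisj i j hij)).symm
      _ ≤ Fintype.card (Fin n) := Finset.card_le_univ _
      _ = n := Fintype.card_fin n
  have hcardI : Fintype.card ((Σ i : {i : Fin ψ // 1 ≤ kvec i}, (Ds i.1).CodeIdx)
      ⊕ {v : Fin n // ∀ i, v ∉ S i}) ≤ n - ∑ i : Fin ψ, (kvec i - 1) := by
    have h1 : Fintype.card ((Σ i : {i : Fin ψ // 1 ≤ kvec i}, (Ds i.1).CodeIdx)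
        ⊕ {v : Fin n // ∀ i, v ∉ S i})
        = (∑ i ∈ Finset.univ.filter fun i : Fin ψ => 1 ≤ kvec i, Fintype.card (Ds i).CodeIdx)
          + (Finset.univ.filter fun v : Fin n => ∀ i, v ∉ S i).card := by
      rw [Fintype.card_sum, Fintype.card_sigma, Fintype.card_subtype]
      congr 1
      exact (Finset.sum_subtype (p := fun i : Fin ψ => 1 ≤ kvec i)
        (Finset.univ.filter fun i : Fin ψ => 1 ≤ kvec i)
        (fun i => by simp) (fun i => Fintype.card (Ds i).CodeIdx)).symm
    have h2 : (Finset.univ.filter fun v : Fin n => ∀ i, v ∉ S i).card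
        = n - (Finset.univ.biUnion S).card := by
      have : (Finset.univ.filter fun v : Fin n => ∀ i, v ∉ S i)
          = Finset.univ \ Finset.univ.biUnion S := by
        ext v; simp
      rw [this, Finset.card_sdiff_of_subset (Finset.subset_univ _)]
      simp
    have h3 : (Finset.univ.biUnion S).card = ∑ i, (S i).card :=
      Finset.card_biUnion (fun i _ j _ hij => hdisj i j hij)
    have h4 : ∑ i : Fin ψ, (kvec i - 1)
        = ∑ i ∈ Finset.univ.filter fun i : Fin ψ => 1 ≤ kvec i, (kvec i - 1) :=
      (Finset.sum_subset (Finset.filter_subset _ _)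
        (fun i _ hi => by simp at hi; omega)).symm
    have h5 : (∑ i ∈ Finset.univ.filter fun i : Fin ψ => 1 ≤ kvec i, Fintype.card (Ds i).CodeIdx)
        + ∑ i ∈ Finset.univ.filter fun i : Fin ψ => 1 ≤ kvec i, (kvec i - 1)
        = ∑ i ∈ Finset.univ.filter fun i : Fin ψ => 1 ≤ kvec i, (S i).card := by
      rw [← Finset.sum_add_distrib]
      refine Finset.sum_congr rfl fun i hi => ?_
      simp only [Finset.mem_filter] at hi
      rw [(Ds i).card_codeIdx hi.2, hcardS i]
    have h6 : (∑ i ∈ Finset.univ.filter fun i : Fin ψ => 1 ≤ kvec i, (S i).card)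
        ≤ ∑ i, (S i).card :=
      Finset.sum_le_sum_of_subset (Finset.filter_subset _ _)
    omega
  obtain ⟨ι⟩ := Function.Embedding.nonempty_of_card_le
    (hcardI.trans_eq (Fintype.card_fin _).symm)
  let E : (Fin n → Fin t → ZMod 2) → Fin (n - ∑ i : Fin ψ, (kvec i - 1)) → Fin t → ZMod 2 :=
    fun x => Function.extend ι
      (Sum.elim
        (fun c : Σ i : {i : Fin ψ // 1 ≤ kvec i}, (Ds i.1).CodeIdx =>
          (Ds c.1.1).code (fun w => x ((e c.1.1) w).1) c.2)
        (fun p : {v : Fin n // ∀ i, v ∉ S i} => x p.1)) 0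
  have hE1 : ∀ (x : Fin n → Fin t → ZMod 2) (i' : {i : Fin ψ // 1 ≤ kvec i})
      (c : (Ds i'.1).CodeIdx),
      E x (ι (Sum.inl ⟨i', c⟩)) = (Ds i'.1).code (fun w => x ((e i'.1) w).1) c :=
    fun x i' c => ι.injective.extend_apply _ _ _
  have hE2 : ∀ (x : Fin n → Fin t → ZMod 2) (p : {v : Fin n // ∀ i, v ∉ S i}),
      E x (ι (Sum.inr p)) = x p.1 :=
    fun x p => ι.injective.extend_apply _ _ _
  refine ⟨E, fun v => ?_⟩
  by_cases hv : ∀ i, v ∉ S i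
  · exact ⟨fun w _ => w (ι (Sum.inr ⟨v, hv⟩)), fun x => hE2 x ⟨v, hv⟩⟩
  · push_neg at hv
    obtain ⟨i, hvi⟩ := hv
    obtain ⟨u, hu⟩ : ∃ u, ((e i) u).1 = v := ⟨(e i).symm ⟨v, hvi⟩, by simp⟩
    have harc : ∀ w w' : (Ds i).Vtx, (Ds i).Arc w w' → ((e i) w).1 = v → A v ((e i) w').1 :=
      fun w w' h hw => hw ▸ (hind i w w').mp h
    have hq1' := (Ds i).hq1
    have hq2' := (Ds i).hq2
    have hn1' := (Ds i).hn1
    rcases u with ⟨j, a⟩ | ⟨⟨p1, p2⟩, b⟩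
    · -- Type-I vertex
      have hk : 1 ≤ kvec i := j.pos
      by_cases ha : (a : ℕ) + 1 < (Ds i).n1 j
      · -- non-terminal Type-I vertex
        refine ⟨fun w f =>
          w (ι (Sum.inl ⟨⟨i, hk⟩, Sum.inl ⟨j, ⟨(a : ℕ),
            by show (a : ℕ) < (Ds i).n1 j - 1; omega⟩⟩⟩)) +
          f ⟨((e i) (Sum.inl ⟨j, ⟨(a : ℕ) + 1, ha⟩⟩)).1,
            harc (Sum.inl ⟨j, a⟩) (Sum.inl ⟨j, ⟨(a : ℕ) + 1, ha⟩⟩)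
              (Or.inl ⟨rfl, rfl⟩) hu⟩, fun x => ?_⟩
        simp only []
        have hcode : E x (ι (Sum.inl ⟨⟨i, hk⟩, Sum.inl ⟨j, ⟨(a : ℕ),
              by show (a : ℕ) < (Ds i).n1 j - 1; omega⟩⟩⟩))
            = x ((e i) (Sum.inl ⟨j, a⟩)).1 + x ((e i) (Sum.inl ⟨j, ⟨(a : ℕ) + 1, ha⟩⟩)).1 := by
          rw [hE1]
          show (Ds i).msgI _ j ((a : ℕ) + 1) + (Ds i).msgI _ j ((a : ℕ) + 2) = _
          rw [(Ds i).msgI_eq _ j ((a : ℕ) + 1) a (by omega)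
              (by show (a : ℕ) = (a : ℕ) + 1 - 1; omega),
            (Ds i).msgI_eq _ j ((a : ℕ) + 2) ⟨(a : ℕ) + 1, ha⟩ (by omega)
              (by show (a : ℕ) + 1 = (a : ℕ) + 2 - 1; omega)]
        rw [hcode, ← hu, add_assoc, zmod2_cancel, add_zero]
      · -- terminal Type-I vertex
        have haa : (a : ℕ) + 1 = (Ds i).n1 j := by have := a.isLt; omega
        refine ⟨fun w f =>
          w (ι (Sum.inl ⟨⟨i, hk⟩, Sum.inr (Sum.inr (Sum.inr ()))⟩)) +
          ∑ jj ∈ (Finset.univ.erase j).attach,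
            (if h0 : (Ds i).n2 j jj.1 = 0 then
              f ⟨((e i) (Sum.inl ⟨jj.1, ⟨(Ds i).q j jj.1 - 1,
                  by show (Ds i).q j jj.1 - 1 < (Ds i).n1 jj.1;
                     have := hq1' j jj.1; have := hq2' j jj.1; have := hn1' jj.1; omega⟩⟩)).1,
                harc (Sum.inl ⟨j, a⟩) (Sum.inl ⟨jj.1, _⟩)
                  (Or.inr ⟨Ne.symm (Finset.ne_of_mem_erase jj.2), by omega, h0, rfl⟩) hu⟩ +
              ∑ aa ∈ (Finset.Ico ((Ds i).q j jj.1) ((Ds i).n1 jj.1)).attach,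
                w (ι (Sum.inl ⟨⟨i, hk⟩, Sum.inl ⟨jj.1, ⟨aa.1 - 1,
                  by show aa.1 - 1 < (Ds i).n1 jj.1 - 1;
                     have := Finset.mem_Ico.mp aa.2; have := hq1' j jj.1; omega⟩⟩⟩))
            else
              f ⟨((e i) (Sum.inr ⟨(j, jj.1), ⟨0, by show 0 < (Ds i).n2 j jj.1; omega⟩⟩)).1,
                harc (Sum.inl ⟨j, a⟩) (Sum.inr ⟨(j, jj.1), _⟩)
                  ⟨rfl, by omega, rfl⟩ hu⟩ +
              ∑ bb ∈ (Finset.Ico 1 ((Ds i).n2 j jj.1)).attach,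
                w (ι (Sum.inl ⟨⟨i, hk⟩, Sum.inr (Sum.inl ⟨(j, jj.1), ⟨bb.1 - 1,
                  by show bb.1 - 1 < (Ds i).n2 j jj.1 - 1;
                     have := Finset.mem_Ico.mp bb.2; omega⟩⟩)⟩)) +
              w (ι (Sum.inl ⟨⟨i, hk⟩, Sum.inr (Sum.inr (Sum.inl ⟨(j, jj.1),
                  by show 1 ≤ (Ds i).n2 j jj.1; omega⟩))⟩)) +
              ∑ aa ∈ (Finset.Ico ((Ds i).q j jj.1) ((Ds i).n1 jj.1)).attach,
                w (ι (Sum.inl ⟨⟨i, hk⟩, Sum.inl ⟨jj.1, ⟨aa.1 - 1,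
                  by show aa.1 - 1 < (Ds i).n1 jj.1 - 1;
                     have := Finset.mem_Ico.mp aa.2; have := hq1' j jj.1; omega⟩⟩⟩))),
          fun x => ?_⟩
        simp only []
        rw [← hu]
        have hfirst : E x (ι (Sum.inl ⟨⟨i, hk⟩, Sum.inr (Sum.inr (Sum.inr ()))⟩))
            = ∑ m, (Ds i).msgI (fun w => x ((e i) w).1) m ((Ds i).n1 m) := by
          rw [hE1]; rfl
        rw [hfirst]
        have hterm : ∀ (jj : Fin (kvec i)) (aa : ℕ), 1 ≤ aa → aa < (Ds i).n1 jj →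
            ∀ (pf : aa - 1 < (Ds i).n1 jj - 1),
            E x (ι (Sum.inl ⟨⟨i, hk⟩, Sum.inl ⟨jj, ⟨aa - 1, pf⟩⟩⟩))
            = (Ds i).msgI (fun w => x ((e i) w).1) jj aa
              + (Ds i).msgI (fun w => x ((e i) w).1) jj (aa + 1) := by
          intro jj aa h1 h2 pf
          rw [hE1]
          show (Ds i).msgI _ jj (aa - 1 + 1) + (Ds i).msgI _ jj (aa - 1 + 2) = _
          have e1 : aa - 1 + 1 = aa := by omega
          have e2 : aa - 1 + 2 = aa + 1 := by omega
          rw [e1, e2]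
        have htail : ∀ jj : Fin (kvec i),
            (∑ aa ∈ (Finset.Ico ((Ds i).q j jj) ((Ds i).n1 jj)).attach,
              E x (ι (Sum.inl ⟨⟨i, hk⟩, Sum.inl ⟨jj, ⟨aa.1 - 1,
                by show aa.1 - 1 < (Ds i).n1 jj - 1;
                   have := Finset.mem_Ico.mp aa.2; have := hq1' j jj; omega⟩⟩⟩)))
            = (Ds i).msgI (fun w => x ((e i) w).1) jj ((Ds i).q j jj)
              + (Ds i).msgI (fun w => x ((e i) w).1) jj ((Ds i).n1 jj) := by
          intro jj
          have h1 := zmod2_tele (fun m => (Ds i).msgI (fun w => x ((e i) w).1) jj m) (hq2' j jj)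
          rw [← h1, ← Finset.sum_attach (Finset.Ico ((Ds i).q j jj) ((Ds i).n1 jj))
            (fun m => (Ds i).msgI (fun w => x ((e i) w).1) jj m
              + (Ds i).msgI (fun w => x ((e i) w).1) jj (m + 1))]
          exact Finset.sum_congr rfl fun aa _ => hterm jj aa.1
            (by have := Finset.mem_Ico.mp aa.2; have := hq1' j jj; omega)
            (Finset.mem_Ico.mp aa.2).2 _
        have hkey : ∀ (jj : Fin (kvec i)), jj ∈ Finset.univ.erase j →
            (if h0 : (Ds i).n2 j jj = 0 then
              x ((e i) (Sum.inl ⟨jj, ⟨(Ds i).q j jj - 1,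
                  by show (Ds i).q j jj - 1 < (Ds i).n1 jj;
                     have := hq1' j jj; have := hq2' j jj; have := hn1' jj; omega⟩⟩)).1 +
              ∑ aa ∈ (Finset.Ico ((Ds i).q j jj) ((Ds i).n1 jj)).attach,
                E x (ι (Sum.inl ⟨⟨i, hk⟩, Sum.inl ⟨jj, ⟨aa.1 - 1,
                  by show aa.1 - 1 < (Ds i).n1 jj - 1;
                     have := Finset.mem_Ico.mp aa.2; have := hq1' j jj; omega⟩⟩⟩))
            else
              x ((e i) (Sum.inr ⟨(j, jj), ⟨0, by show 0 < (Ds i).n2 j jj; omega⟩⟩)).1 +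
              ∑ bb ∈ (Finset.Ico 1 ((Ds i).n2 j jj)).attach,
                E x (ι (Sum.inl ⟨⟨i, hk⟩, Sum.inr (Sum.inl ⟨(j, jj), ⟨bb.1 - 1,
                  by show bb.1 - 1 < (Ds i).n2 j jj - 1;
                     have := Finset.mem_Ico.mp bb.2; omega⟩⟩)⟩)) +
              E x (ι (Sum.inl ⟨⟨i, hk⟩, Sum.inr (Sum.inr (Sum.inl ⟨(j, jj),
                  by show 1 ≤ (Ds i).n2 j jj; omega⟩))⟩)) +
              ∑ aa ∈ (Finset.Ico ((Ds i).q j jj) ((Ds i).n1 jj)).attach,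
                E x (ι (Sum.inl ⟨⟨i, hk⟩, Sum.inl ⟨jj, ⟨aa.1 - 1,
                  by show aa.1 - 1 < (Ds i).n1 jj - 1;
                     have := Finset.mem_Ico.mp aa.2; have := hq1' j jj; omega⟩⟩⟩)))
            = (Ds i).msgI (fun w => x ((e i) w).1) jj ((Ds i).n1 jj) := by
          intro jj hjj
          by_cases h0 : (Ds i).n2 j jj = 0
          · rw [dif_pos h0, htail jj]
            have hside : (Ds i).msgI (fun w => x ((e i) w).1) jj ((Ds i).q j jj)
                = x ((e i) (Sum.inl ⟨jj, ⟨(Ds i).q j jj - 1,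
                    by show (Ds i).q j jj - 1 < (Ds i).n1 jj;
                       have := hq1' j jj; have := hq2' j jj; have := hn1' jj; omega⟩⟩)).1 := by
              rw [(Ds i).msgI_eq _ jj ((Ds i).q j jj) ⟨(Ds i).q j jj - 1,
                by show (Ds i).q j jj - 1 < (Ds i).n1 jj;
                   have := hq1' j jj; have := hq2' j jj; have := hn1' jj; omega⟩
                (hq1' j jj) rfl]
            rw [← hside, ← add_assoc, zmod2_cancel, zero_add]
          · rw [dif_neg h0]
            have hsideA : (Ds i).msgII (fun w => x ((e i) w).1) j jj 1
                = x ((e i) (Sum.inr ⟨(j, jj), ⟨0, by show 0 < (Ds i).n2 j jj; omega⟩⟩)).1 := by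
              rw [(Ds i).msgII_eq _ j jj 1 ⟨0, by show 0 < (Ds i).n2 j jj; omega⟩ le_rfl rfl]
            have htermII : ∀ (bb : ℕ), 1 ≤ bb → bb < (Ds i).n2 j jj →
                ∀ (pf : bb - 1 < (Ds i).n2 j jj - 1),
                E x (ι (Sum.inl ⟨⟨i, hk⟩, Sum.inr (Sum.inl ⟨(j, jj), ⟨bb - 1, pf⟩⟩)⟩))
                = (Ds i).msgII (fun w => x ((e i) w).1) j jj bb
                  + (Ds i).msgII (fun w => x ((e i) w).1) j jj (bb + 1) := by
              intro bb h1 h2 pf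
              rw [hE1]
              show (Ds i).msgII _ j jj (bb - 1 + 1) + (Ds i).msgII _ j jj (bb - 1 + 2) = _
              have e1 : bb - 1 + 1 = bb := by omega
              have e2 : bb - 1 + 2 = bb + 1 := by omega
              rw [e1, e2]
            have htailII : (∑ bb ∈ (Finset.Ico 1 ((Ds i).n2 j jj)).attach,
                E x (ι (Sum.inl ⟨⟨i, hk⟩, Sum.inr (Sum.inl ⟨(j, jj), ⟨bb.1 - 1,
                  by show bb.1 - 1 < (Ds i).n2 j jj - 1;
                     have := Finset.mem_Ico.mp bb.2; omega⟩⟩)⟩)))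
                = (Ds i).msgII (fun w => x ((e i) w).1) j jj 1
                  + (Ds i).msgII (fun w => x ((e i) w).1) j jj ((Ds i).n2 j jj) := by
              have h1 := zmod2_tele (fun m => (Ds i).msgII (fun w => x ((e i) w).1) j jj m)
                (by omega : 1 ≤ (Ds i).n2 j jj)
              rw [← h1, ← Finset.sum_attach (Finset.Ico 1 ((Ds i).n2 j jj))
                (fun m => (Ds i).msgII (fun w => x ((e i) w).1) j jj m
                  + (Ds i).msgII (fun w => x ((e i) w).1) j jj (m + 1))]
              exact Finset.sum_congr rfl fun bb _ => htermII bb.1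
                (Finset.mem_Ico.mp bb.2).1 (Finset.mem_Ico.mp bb.2).2 _
            have hC : E x (ι (Sum.inl ⟨⟨i, hk⟩, Sum.inr (Sum.inr (Sum.inl ⟨(j, jj),
                  by show 1 ≤ (Ds i).n2 j jj; omega⟩))⟩))
                = (Ds i).msgII (fun w => x ((e i) w).1) j jj ((Ds i).n2 j jj)
                  + (Ds i).msgI (fun w => x ((e i) w).1) jj ((Ds i).q j jj) := by
              rw [hE1]; rfl
            rw [← hsideA, htailII, hC, htail jj]
            funext s
            simp only [Pi.add_apply]
            have hfin : ∀ A B C D : ZMod 2, A + (A + B) + (B + C) + (C + D) = D := by decide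
            exact hfin _ _ _ _
        have hsum3 : (∑ jj ∈ (Finset.univ.erase j).attach,
            (if h0 : (Ds i).n2 j jj.1 = 0 then
              x ((e i) (Sum.inl ⟨jj.1, ⟨(Ds i).q j jj.1 - 1,
                  by show (Ds i).q j jj.1 - 1 < (Ds i).n1 jj.1;
                     have := hq1' j jj.1; have := hq2' j jj.1; have := hn1' jj.1; omega⟩⟩)).1 +
              ∑ aa ∈ (Finset.Ico ((Ds i).q j jj.1) ((Ds i).n1 jj.1)).attach,
                E x (ι (Sum.inl ⟨⟨i, hk⟩, Sum.inl ⟨jj.1, ⟨aa.1 - 1,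
                  by show aa.1 - 1 < (Ds i).n1 jj.1 - 1;
                     have := Finset.mem_Ico.mp aa.2; have := hq1' j jj.1; omega⟩⟩⟩))
            else
              x ((e i) (Sum.inr ⟨(j, jj.1), ⟨0, by show 0 < (Ds i).n2 j jj.1; omega⟩⟩)).1 +
              ∑ bb ∈ (Finset.Ico 1 ((Ds i).n2 j jj.1)).attach,
                E x (ι (Sum.inl ⟨⟨i, hk⟩, Sum.inr (Sum.inl ⟨(j, jj.1), ⟨bb.1 - 1,
                  by show bb.1 - 1 < (Ds i).n2 j jj.1 - 1;
                     have := Finset.mem_Ico.mp bb.2; omega⟩⟩)⟩)) +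
              E x (ι (Sum.inl ⟨⟨i, hk⟩, Sum.inr (Sum.inr (Sum.inl ⟨(j, jj.1),
                  by show 1 ≤ (Ds i).n2 j jj.1; omega⟩))⟩)) +
              ∑ aa ∈ (Finset.Ico ((Ds i).q j jj.1) ((Ds i).n1 jj.1)).attach,
                E x (ι (Sum.inl ⟨⟨i, hk⟩, Sum.inl ⟨jj.1, ⟨aa.1 - 1,
                  by show aa.1 - 1 < (Ds i).n1 jj.1 - 1;
                     have := Finset.mem_Ico.mp aa.2; have := hq1' j jj.1; omega⟩⟩⟩))))
            = ∑ jj ∈ Finset.univ.erase j,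
                (Ds i).msgI (fun w => x ((e i) w).1) jj ((Ds i).n1 jj) := by
          rw [← Finset.sum_attach (Finset.univ.erase j)
            (fun jj => (Ds i).msgI (fun w => x ((e i) w).1) jj ((Ds i).n1 jj))]
          exact Finset.sum_congr rfl fun jj _ => hkey jj.1 jj.2
        rw [hsum3]
        have hsplit := (Finset.add_sum_erase Finset.univ
          (fun m => (Ds i).msgI (fun w => x ((e i) w).1) m ((Ds i).n1 m))
          (Finset.mem_univ j)).symm
        rw [hsplit, add_assoc, zmod2_cancel, add_zero]
        rw [(Ds i).msgI_eq (fun w => x ((e i) w).1) j ((Ds i).n1 j) a (hn1' j) (by omega)]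
    · -- Type-II vertex
      have hk : 1 ≤ kvec i := p1.pos
      have hblt : (b : ℕ) < (Ds i).n2 p1 p2 := b.isLt
      by_cases hb : (b : ℕ) + 1 < (Ds i).n2 p1 p2
      · -- non-terminal Type-II vertex
        refine ⟨fun w f =>
          w (ι (Sum.inl ⟨⟨i, hk⟩, Sum.inr (Sum.inl ⟨(p1, p2), ⟨(b : ℕ),
            by show (b : ℕ) < (Ds i).n2 p1 p2 - 1; omega⟩⟩)⟩)) +
          f ⟨((e i) (Sum.inr ⟨(p1, p2), ⟨(b : ℕ) + 1, hb⟩⟩)).1,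
            harc (Sum.inr ⟨(p1, p2), b⟩) (Sum.inr ⟨(p1, p2), ⟨(b : ℕ) + 1, hb⟩⟩)
              ⟨rfl, rfl⟩ hu⟩, fun x => ?_⟩
        simp only []
        have hcode : E x (ι (Sum.inl ⟨⟨i, hk⟩, Sum.inr (Sum.inl ⟨(p1, p2), ⟨(b : ℕ),
              by show (b : ℕ) < (Ds i).n2 p1 p2 - 1; omega⟩⟩)⟩))
            = x ((e i) (Sum.inr ⟨(p1, p2), b⟩)).1
              + x ((e i) (Sum.inr ⟨(p1, p2), ⟨(b : ℕ) + 1, hb⟩⟩)).1 := by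
          rw [hE1]
          show (Ds i).msgII _ p1 p2 ((b : ℕ) + 1) + (Ds i).msgII _ p1 p2 ((b : ℕ) + 2) = _
          rw [(Ds i).msgII_eq _ p1 p2 ((b : ℕ) + 1) b (by omega)
              (by show (b : ℕ) = (b : ℕ) + 1 - 1; omega),
            (Ds i).msgII_eq _ p1 p2 ((b : ℕ) + 2) ⟨(b : ℕ) + 1, hb⟩ (by omega)
              (by show (b : ℕ) + 1 = (b : ℕ) + 2 - 1; omega)]
        rw [hcode, ← hu, add_assoc, zmod2_cancel, add_zero]
      · -- last vertex of a Type-II path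
        have hpos : 1 ≤ (Ds i).n2 p1 p2 := b.pos
        refine ⟨fun w f =>
          w (ι (Sum.inl ⟨⟨i, hk⟩, Sum.inr (Sum.inr (Sum.inl ⟨(p1, p2), hpos⟩))⟩)) +
          f ⟨((e i) (Sum.inl ⟨p2, ⟨(Ds i).q p1 p2 - 1,
              by show (Ds i).q p1 p2 - 1 < (Ds i).n1 p2;
                 have := hq1' p1 p2; have := hq2' p1 p2; have := hn1' p2; omega⟩⟩)).1,
            harc (Sum.inr ⟨(p1, p2), b⟩) (Sum.inl ⟨p2, _⟩)
              ⟨rfl, by show (b : ℕ) = (Ds i).n2 p1 p2 - 1; omega, rfl⟩ hu⟩, fun x => ?_⟩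
        simp only []
        have hcode : E x (ι (Sum.inl ⟨⟨i, hk⟩, Sum.inr (Sum.inr (Sum.inl ⟨(p1, p2), hpos⟩))⟩))
            = x ((e i) (Sum.inr ⟨(p1, p2), b⟩)).1
              + x ((e i) (Sum.inl ⟨p2, ⟨(Ds i).q p1 p2 - 1,
                  by show (Ds i).q p1 p2 - 1 < (Ds i).n1 p2;
                     have := hq1' p1 p2; have := hq2' p1 p2; have := hn1' p2; omega⟩⟩)).1 := by
          rw [hE1]
          show (Ds i).msgII _ p1 p2 ((Ds i).n2 p1 p2) + (Ds i).msgI _ p2 ((Ds i).q p1 p2) = _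
          rw [(Ds i).msgII_eq _ p1 p2 ((Ds i).n2 p1 p2) b (by omega) (by omega),
            (Ds i).msgI_eq _ p2 ((Ds i).q p1 p2) ⟨(Ds i).q p1 p2 - 1,
              by show (Ds i).q p1 p2 - 1 < (Ds i).n1 p2;
                 have := hq1' p1 p2; have := hq2' p1 p2; have := hn1' p2; omega⟩
              (hq1' p1 p2) rfl]
        rw [hcode, ← hu, add_assoc, zmod2_cancel, add_zero]
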